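/- Under the assumptions w₁ᵀΣ₁₁w₁ ≤ Σ₃₃, w₁ᵀΣ₁₃ ≥ 0, (w*)ᵀΣ₂₂w* > 0, and the correlation condition ρ(w₁ᵀx₁, (w*)ᵀx₂) > ρ((w*)ᵀx₂, y) (all quantities defined from a centered jointly Gaussian (x₁, x₂, y) with w* = Σ₂₂⁻¹Σ₂₃), the quantity w₁ᵀ(Σ₁₃ - Σ₁₂w*) - (Σ₃₃ - (w*)ᵀΣ₂₂w*) is strictly negative. -/

import Mathlib

open Matrix

lemma my_cs {n : Type*} [Fintype n] (M : Matrix n n ℝ) (hM : M.PosSemidef)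
    (u v : n → ℝ) :
    (u ⬝ᵥ (M *ᵥ v)) ^ 2 ≤ (u ⬝ᵥ (M *ᵥ u)) * (v ⬝ᵥ (M *ᵥ v)) := by
  have hMt : Mᵀ = M := by
    have := hM.1.eq
    rwa [Matrix.conjTranspose_eq_transpose_of_trivial] at this
  have hsym : ∀ x y : n → ℝ, x ⬝ᵥ (M *ᵥ y) = y ⬝ᵥ (M *ᵥ x) := by
    intro x y
    rw [dotProduct_mulVec, ← Matrix.mulVec_transpose, hMt, dotProduct_comm]
  have hquad : ∀ t : ℝ, 0 ≤ (v ⬝ᵥ (M *ᵥ v)) * (t * t) + (2 * (u ⬝ᵥ (M *ᵥ v))) * t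
      + (u ⬝ᵥ (M *ᵥ u)) := by
    intro t
    have h := hM.dotProduct_mulVec_nonneg (u + t • v)
    simp only [star_trivial, mulVec_add, mulVec_smul, add_dotProduct, dotProduct_add,
      dotProduct_smul, smul_dotProduct, smul_eq_mul, smul_smul] at h
    rw [hsym v u] at h
    nlinarith [h]
  have hd := discrim_le_zero hquad
  rw [discrim] at hd
  nlinarith [hd]

set_option maxHeartbeats 1000000 in
theorem cch_condition_negative (p : ℕ)
    (S11 S12 S22 : Matrix (Fin p) (Fin p) ℝ) (hS22 : S22.PosDef)
    (S13 S23 : Fin p → ℝ) (S33 : ℝ) (hS33 : 0 < S33)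
    (hjoint : (Matrix.fromBlocks
        (Matrix.fromBlocks S11 S12 S12ᵀ S22)
        (Matrix.of fun i (_ : Unit) => Sum.elim S13 S23 i)
        (Matrix.of fun (_ : Unit) j => Sum.elim S13 S23 j)
        (Matrix.of fun (_ : Unit) (_ : Unit) => S33)).PosSemidef)
    (w1 : Fin p → ℝ) (hw1pos : 0 < w1 ⬝ᵥ (S11 *ᵥ w1))
    (ws : Fin p → ℝ) (hws : ws = S22⁻¹ *ᵥ S23)
    (hbound : w1 ⬝ᵥ (S11 *ᵥ w1) ≤ S33)
    (hS13 : 0 ≤ w1 ⬝ᵥ S13)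
    (hwspos : 0 < ws ⬝ᵥ (S22 *ᵥ ws))
    (hcorr : w1 ⬝ᵥ (S12 *ᵥ ws) /
        (Real.sqrt (w1 ⬝ᵥ (S11 *ᵥ w1)) * Real.sqrt (ws ⬝ᵥ (S22 *ᵥ ws)))
      > Real.sqrt (ws ⬝ᵥ (S22 *ᵥ ws)) / Real.sqrt S33) :
    w1 ⬝ᵥ (S13 - S12 *ᵥ ws) - (S33 - ws ⬝ᵥ (S22 *ᵥ ws)) < 0 := by
  set M := (Matrix.fromBlocks
        (Matrix.fromBlocks S11 S12 S12ᵀ S22)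
        (Matrix.of fun i (_ : Unit) => Sum.elim S13 S23 i)
        (Matrix.of fun (_ : Unit) j => Sum.elim S13 S23 j)
        (Matrix.of fun (_ : Unit) (_ : Unit) => S33)) with hM
  set u1 : (Fin p ⊕ Fin p) ⊕ Unit → ℝ := Sum.elim (Sum.elim w1 0) 0 with hu1
  set u2 : (Fin p ⊕ Fin p) ⊕ Unit → ℝ := Sum.elim (Sum.elim 0 ws) 0 with hu2
  set e : (Fin p ⊕ Fin p) ⊕ Unit → ℝ := Sum.elim (Sum.elim 0 0) (fun _ => 1) with he
  have hS22ws : S22 *ᵥ ws = S23 := by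
    rw [hws, Matrix.mulVec_mulVec, Matrix.mul_nonsing_inv _ (isUnit_iff_ne_zero.mpr hS22.det_pos.ne'),
      Matrix.one_mulVec]
  have h1 : u1 ⬝ᵥ (M *ᵥ u1) = w1 ⬝ᵥ (S11 *ᵥ w1) := by
    simp [hM, hu1, fromBlocks_mulVec, sumElim_dotProduct_sumElim, mulVec]
  have h2 : u1 ⬝ᵥ (M *ᵥ e) = w1 ⬝ᵥ S13 := by
    simp [hM, hu1, he, fromBlocks_mulVec, sumElim_dotProduct_sumElim, mulVec, dotProduct]
  have h3 : e ⬝ᵥ (M *ᵥ e) = S33 := by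
    simp [hM, he, fromBlocks_mulVec, sumElim_dotProduct_sumElim, mulVec, dotProduct]
  have h4 : u2 ⬝ᵥ (M *ᵥ e) = ws ⬝ᵥ (S22 *ᵥ ws) := by
    rw [hS22ws]
    simp [hM, hu2, he, fromBlocks_mulVec, sumElim_dotProduct_sumElim, mulVec, dotProduct]
  have h5 : u2 ⬝ᵥ (M *ᵥ u2) = ws ⬝ᵥ (S22 *ᵥ ws) := by
    simp [hM, hu2, fromBlocks_mulVec, sumElim_dotProduct_sumElim, mulVec]
  have cs1 := my_cs M hjoint u1 e
  have cs2 := my_cs M hjoint u2 e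
  rw [h1, h2, h3] at cs1
  rw [h5, h4, h3] at cs2
  -- scalar abbreviations
  set A := w1 ⬝ᵥ (S11 *ᵥ w1) with hA
  set s2 := ws ⬝ᵥ (S22 *ᵥ ws) with hs2
  set C := w1 ⬝ᵥ S13 with hC
  set D := w1 ⬝ᵥ (S12 *ᵥ ws) with hD
  have hs2le : s2 ≤ S33 := by nlinarith [cs2, hwspos]
  set α := Real.sqrt A with hα
  set σ := Real.sqrt s2 with hσ
  set β := Real.sqrt S33 with hβ
  have hα2 : α ^ 2 = A := Real.sq_sqrt hw1pos.le
  have hσ2 : σ ^ 2 = s2 := Real.sq_sqrt hwspos.le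
  have hβ2 : β ^ 2 = S33 := Real.sq_sqrt hS33.le
  have hαpos : 0 < α := Real.sqrt_pos.mpr hw1pos
  have hσpos : 0 < σ := Real.sqrt_pos.mpr hwspos
  have hβpos : 0 < β := Real.sqrt_pos.mpr hS33
  have hαβ : α ≤ β := Real.sqrt_le_sqrt hbound
  have hσβ : σ ≤ β := Real.sqrt_le_sqrt hs2le
  have hCle : C ≤ α * β := by nlinarith [cs1, mul_pos hαpos hβpos]
  have hDgt : σ * (α * σ) < D * β := by
    rw [gt_iff_lt, div_lt_div_iff₀ hβpos (mul_pos hαpos hσpos)] at hcorr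
    linarith
  have hgoal : w1 ⬝ᵥ (S13 - S12 *ᵥ ws) = C - D := by
    simp [hC, hD, dotProduct_sub]
  rw [hgoal]
  nlinarith [mul_nonneg (sub_nonneg.mpr hαβ) (sub_nonneg.mpr (by nlinarith : σ^2 ≤ β^2)),
    hβpos, hDgt, hCle, mul_le_mul_of_nonneg_left hCle hβpos.le]
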